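/- Let Θ = ({D_g},{θ_g}) be a partial action of the free group 𝔽 on a C*-algebra A. The grading B_g = D_g δ_g of A ⋊ 𝔽 is semi-saturated if and only if D_{gh} ⊆ D_g whenever |gh| = |g| + |h|, and orthogonal if and only if D_x ∩ D_y = {0} for all distinct generators x, y. -/

import Mathlib

/-- In a unital C⋆-algebra, an element of a two-sided ideal (given as a `ℂ`-submodule closed
under multiplication by arbitrary elements) can be approximated by `d * b` with `b` in the
ideal. -/
lemma ideal_approx {A : Type*} [NormedRing A] [StarRing A]
    [CStarRing A] [NormedAlgebra ℂ A] [CompleteSpace A] [StarModule ℂ A]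
    (J : Submodule ℂ A)
    (hJ : ∀ a : A, ∀ d ∈ J, a * d ∈ J ∧ d * a ∈ J)
    (d : A) (hd : d ∈ J) {ε : ℝ} (hε : 0 < ε) :
    ∃ b ∈ J, ‖d - d * b‖ < ε := by
  letI : CStarAlgebra A :=
    { ‹NormedRing A›, ‹StarRing A›, ‹CStarRing A›, ‹NormedAlgebra ℂ A›,
      ‹CompleteSpace A›, ‹StarModule ℂ A› with }
  letI : PartialOrder A := CStarAlgebra.spectralOrder A
  haveI : StarOrderedRing A := CStarAlgebra.spectralOrderedRing A
  set δ : ℝ := 2 * ε ^ 2 with hδdef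
  have hδ : 0 < δ := by positivity
  set y : A := star d * d with hy
  have hy0 : (0 : A) ≤ y := star_mul_self_nonneg d
  have hyJ : y ∈ J := (hJ (star d) d hd).1
  set m : A := algebraMap ℝ A δ with hm
  have hm1 : ∀ z : A, m * z = δ • z := fun z => (Algebra.smul_def δ z).symm
  have hm2 : ∀ z : A, z * m = δ • z := fun z => by
    rw [hm, ← Algebra.commutes δ z, ← Algebra.smul_def]
  set u : A := y + m with hu
  have hU : IsUnit u := by
    have hspec : ∀ x ∈ spectrum ℝ y, 0 ≤ x := fun x hx =>
      spectrum_nonneg_of_nonneg hy0 hx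
    have hmem : (-δ) ∉ spectrum ℝ y := fun hmem => absurd (hspec _ hmem) (by linarith)
    have := (spectrum.notMem_iff.mp hmem).neg
    rw [neg_sub, map_neg, sub_neg_eq_add] at this
    simpa [hu, hm] using this
  obtain ⟨U, hUu⟩ := hU
  set v : A := ↑U⁻¹ with hv
  have huv : u * v = 1 := by rw [hv, ← hUu]; exact U.mul_inv
  have hvu : v * u = 1 := by rw [hv, ← hUu]; exact U.inv_mul
  have hus : star u = u := by
    have h1 : star y = y := by simp [hy, star_mul]
    have h2 : star m = m := by
      rw [hm, Algebra.algebraMap_eq_smul_one, star_smul, star_one, star_trivial]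
    rw [hu, star_add, h1, h2]
  have hsv : star v * u = 1 := by
    rw [← hus, ← star_mul, huv, star_one]
  have hvs : star v = v := by
    calc star v = star v * (u * v) := by rw [huv, mul_one]
    _ = (star v * u) * v := by rw [mul_assoc]
    _ = v := by rw [hsv, one_mul]
  set c : ℝ := (4 * δ)⁻¹ with hc
  have hc0 : 0 < c := by positivity
  set s : A := y - m with hs
  have hss : star s = s := by
    have h1 : star y = y := by simp [hy, star_mul]
    have h2 : star m = m := by
      rw [hm, Algebra.algebraMap_eq_smul_one, star_smul, star_one, star_trivial]
    rw [hs, star_sub, h1, h2]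
  -- 0 ≤ c • (s * s)
  have hsq : (0 : A) ≤ c • (s * s) := by
    have h2 : (Real.sqrt c) * (Real.sqrt c) = c := Real.mul_self_sqrt hc0.le
    have := star_mul_self_nonneg ((Real.sqrt c) • s)
    rwa [star_smul, star_trivial, hss, smul_mul_smul_comm, h2] at this
  -- y ≤ c • (u * u)
  have hexp : u * u - (4 * δ) • y = s * s := by
    rw [hu, hs, add_mul, mul_add, mul_add, sub_mul, mul_sub, mul_sub, hm1, hm2, hm2]
    module
  have hyle : y ≤ c • (u * u) := by
    rw [← sub_nonneg]
    have h4 : c • ((4 * δ) • y) = y := by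
      rw [smul_smul, hc, inv_mul_cancel₀ (by positivity), one_smul]
    calc (0:A) ≤ c • (s * s) := hsq
    _ = c • (u * u) - y := by rw [← hexp, smul_sub, h4]
  set w : A := star v * y * v with hw
  have hw0 : (0 : A) ≤ w := star_left_conjugate_nonneg hy0 v
  have hwle : w ≤ algebraMap ℝ A c := by
    calc w ≤ star v * (c • (u * u)) * v := star_left_conjugate_le_conjugate hyle v
    _ = c • (star v * (u * u) * v) := by
      rw [mul_smul_comm, smul_mul_assoc]
    _ = c • ((star v * u) * (u * v)) := by rw [mul_assoc, mul_assoc, mul_assoc]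
    _ = algebraMap ℝ A c := by rw [hsv, huv, one_mul, Algebra.algebraMap_eq_smul_one]
  have hwnorm : ‖w‖ ≤ c := (CStarAlgebra.norm_le_iff_le_algebraMap w hc0.le hw0).mpr hwle
  refine ⟨y * v, (hJ v y hyJ).2, ?_⟩
  have hdiff : d - d * (y * v) = δ • (d * v) := by
    calc d - d * (y * v) = d * (u * v) - d * (y * v) := by rw [huv, mul_one]
    _ = d * ((u - y) * v) := by rw [sub_mul, mul_sub]
    _ = d * (δ • v) := by rw [hu, add_sub_cancel_left, hm1]
    _ = δ • (d * v) := by rw [mul_smul_comm]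
  rw [hdiff]
  have hn : ‖δ • (d * v)‖ = δ * ‖d * v‖ := by
    rw [norm_smul, Real.norm_eq_abs, abs_of_pos hδ]
  have hsqnorm : ‖d * v‖ * ‖d * v‖ = ‖w‖ := by
    rw [← CStarRing.norm_star_mul_self]
    congr 1
    rw [star_mul, hw, hy, hvs]
    noncomm_ring
  have hlt : (δ * ‖d * v‖) ^ 2 < ε ^ 2 := by
    have h1 : (δ * ‖d * v‖) ^ 2 = δ ^ 2 * (‖d * v‖ * ‖d * v‖) := by ring
    rw [h1, hsqnorm]
    calc δ ^ 2 * ‖w‖ ≤ δ ^ 2 * c := by nlinarith [norm_nonneg w]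
    _ = δ / 4 := by rw [hc]; field_simp
    _ = ε ^ 2 / 2 := by rw [hδdef]; ring
    _ < ε ^ 2 := by nlinarith
  rw [hn]
  have := lt_of_pow_lt_pow_left₀ 2 hε.le hlt
  exact this

/-- Let `Θ = ({D_g},{θ_g})` be a partial action of the free group `𝔽` on a
C*-algebra `A`.  Since `B_g B_h = θ_g(D_{g⁻¹} D_h) δ_{gh}` in the crossed product, the
grading `B_g = D_g δ_g` of `A ⋊ 𝔽` is semi-saturated — the closed span of
`{θ_g(θ_{g⁻¹}(a) b) : a ∈ D_g, b ∈ D_h}` equals `D_{gh}` whenever `|gh| = |g| + |h|` —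
if and only if `D_{gh} ⊆ D_g` whenever `|gh| = |g| + |h|`; and it is orthogonal —
`B_x* B_y = {θ_{x⁻¹}(a* b) δ_{x⁻¹ y} : a ∈ D_x, b ∈ D_y} = {0}` for distinct generators
`x ≠ y` — if and only if `D_x ∩ D_y = {0}` for all distinct generators `x, y`. -/
theorem stmt_8 {𝒢 : Type*} [DecidableEq 𝒢] {A : Type*} [NormedRing A] [StarRing A]
    [CStarRing A] [NormedAlgebra ℂ A] [CompleteSpace A] [StarModule ℂ A]
    (D : FreeGroup 𝒢 → Submodule ℂ A)
    (hDclosed : ∀ g, IsClosed (D g : Set A))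
    (hDideal : ∀ g, ∀ a : A, ∀ d ∈ D g, a * d ∈ D g ∧ d * a ∈ D g)
    (hDstar : ∀ g, ∀ d ∈ D g, star d ∈ D g)
    (hDe : D 1 = ⊤)
    (θ : FreeGroup 𝒢 → A →ₗ[ℂ] A)
    (hθe : ∀ a, θ 1 a = a)
    (hθmap : ∀ g, ∀ a ∈ D g⁻¹, θ g a ∈ D g)
    (hθmul : ∀ g, ∀ a ∈ D g⁻¹, ∀ b ∈ D g⁻¹, θ g (a * b) = θ g a * θ g b)
    (hθstar : ∀ g, ∀ a ∈ D g⁻¹, θ g (star a) = star (θ g a))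
    (hθiso : ∀ g, ∀ a ∈ D g⁻¹, ‖θ g a‖ = ‖a‖)
    (hθdom : ∀ g h, (D g⁻¹ ⊓ D h).map (θ g) = D g ⊓ D (g * h))
    (hθcomp : ∀ g h, ∀ a, a ∈ D h⁻¹ → a ∈ D (h⁻¹ * g⁻¹) → θ g (θ h a) = θ (g * h) a) :
    -- semi-saturated ↔ D decreasing along length-additive products
    ((∀ g h : FreeGroup 𝒢,
        (g * h).toWord.length = g.toWord.length + h.toWord.length →
        (Submodule.span ℂ {c : A | ∃ a ∈ D g, ∃ b ∈ D h,
            c = θ g (θ g⁻¹ a * b)}).topologicalClosure = D (g * h))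
      ↔ (∀ g h : FreeGroup 𝒢,
          (g * h).toWord.length = g.toWord.length + h.toWord.length →
          D (g * h) ≤ D g)) ∧
    -- orthogonal ↔ the ideals of distinct generators intersect trivially
    ((∀ x y : 𝒢, x ≠ y → ∀ a ∈ D (FreeGroup.of x), ∀ b ∈ D (FreeGroup.of y),
        θ (FreeGroup.of x)⁻¹ (star a * b) = 0)
      ↔ (∀ x y : 𝒢, x ≠ y → D (FreeGroup.of x) ⊓ D (FreeGroup.of y) = ⊥)) := by
  have invinv : ∀ g : FreeGroup 𝒢, g⁻¹⁻¹ = g := fun g => inv_inv g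
  constructor
  · constructor
    · -- semi-saturated → decreasing
      intro hss g h hlen
      rw [← hss g h hlen]
      refine Submodule.topologicalClosure_minimal _ (Submodule.span_le.mpr ?_) (hDclosed g)
      rintro c ⟨a, ha, b, hb, rfl⟩
      have h1 : θ g⁻¹ a ∈ D g⁻¹ := hθmap g⁻¹ a (by rw [invinv]; exact ha)
      have h2 : θ g⁻¹ a * b ∈ D g⁻¹ := (hDideal g⁻¹ b _ h1).2
      exact hθmap g _ h2
    · -- decreasing → semi-saturated
      intro hdec g h hlen
      refine le_antisymm ?_ ?_
      · refine Submodule.topologicalClosure_minimal _ (Submodule.span_le.mpr ?_)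
          (hDclosed (g * h))
        rintro c ⟨a, ha, b, hb, rfl⟩
        have h1 : θ g⁻¹ a ∈ D g⁻¹ := hθmap g⁻¹ a (by rw [invinv]; exact ha)
        have h2 : θ g⁻¹ a * b ∈ D g⁻¹ ⊓ D h :=
          ⟨(hDideal g⁻¹ b _ h1).2, (hDideal h (θ g⁻¹ a) b hb).1⟩
        have h3 : θ g (θ g⁻¹ a * b) ∈ D g ⊓ D (g * h) := by
          rw [← hθdom g h]
          exact Submodule.mem_map_of_mem h2
        exact h3.2
      · -- D (g*h) ≤ closure of span
        intro x hx
        have hxg : x ∈ D g := hdec g h hlen hx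
        have hx2 : x ∈ (D g⁻¹ ⊓ D h).map (θ g) := by
          rw [hθdom g h]; exact ⟨hxg, hx⟩
        obtain ⟨e, ⟨heg, heh⟩, rfl⟩ := hx2
        have hmem : (θ g e : A) ∈
            closure ((Submodule.span ℂ {c : A | ∃ a ∈ D g, ∃ b ∈ D h,
              c = θ g (θ g⁻¹ a * b)} : Submodule ℂ A) : Set A) := by
          rw [Metric.mem_closure_iff]
          intro ε hε
          obtain ⟨b, hbJ, hbnorm⟩ := ideal_approx (D h)
            (fun a d hd => hDideal h a d hd) e heh hε
          refine ⟨θ g (e * b), ?_, ?_⟩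
          · apply Submodule.subset_span
            refine ⟨θ g e, hθmap g e heg, b, hbJ, ?_⟩
            have hcomp : θ g⁻¹ (θ g e) = e := by
              have h1 : e ∈ D (g⁻¹ * g⁻¹⁻¹) := by
                rw [invinv, inv_mul_cancel, hDe]; exact Submodule.mem_top
              rw [hθcomp g⁻¹ g e heg h1, inv_mul_cancel, hθe]
            rw [hcomp]
          · have heb : e - e * b ∈ D g⁻¹ :=
              Submodule.sub_mem _ heg (hDideal g⁻¹ b e heg).2
            rw [dist_eq_norm, ← map_sub, hθiso g _ heb]
            exact hbnorm
        exact hmem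
  · constructor
    · -- orthogonal → trivial intersections
      intro horth x y hxy
      rw [eq_bot_iff]
      rintro a ⟨hax, hay⟩
      have h0 := horth x y hxy a hax a hay
      have h1 : star a * a ∈ D (FreeGroup.of x) := (hDideal _ (star a) a hax).1
      have h2 : ‖star a * a‖ = 0 := by
        rw [← hθiso (FreeGroup.of x)⁻¹ (star a * a) (by rw [invinv]; exact h1), h0, norm_zero]
      have h3 : ‖a‖ * ‖a‖ = 0 := by rw [← CStarRing.norm_star_mul_self, h2]
      have h4 : ‖a‖ = 0 := by nlinarith [norm_nonneg a]
      simpa [Submodule.mem_bot] using norm_eq_zero.mp h4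
    · -- trivial intersections → orthogonal
      intro hint x y hxy a hax b hby
      have h1 : star a * b ∈ D (FreeGroup.of x) ⊓ D (FreeGroup.of y) :=
        ⟨(hDideal _ b (star a) (hDstar _ a hax)).2, (hDideal _ (star a) b hby).1⟩
      rw [hint x y hxy] at h1
      rw [Submodule.mem_bot] at h1
      rw [h1, map_zero]
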